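/- For every integer a ≥ 2 there exists a graph G of diameter 2 with L_2(G) = a. In particular, the graph G with vertex set X ∪ Y, where |X| = a, Y is a clique on a(a−1)/2 vertices, X is an independent set, and each pair of distinct vertices of X has exactly one common neighbour in Y (each vertex of Y joined to exactly one pair from X), satisfies diam(G) = 2 and L_2(G) = a. -/

import Mathlib

open Finset

/-- `B` is a `k`-limited packing in `G`: every closed neighbourhood contains
at most `k` vertices of `B`. -/
def limPack {V : Type*} [Fintype V] [DecidableEq V] (G : SimpleGraph V)
    [DecidableRel G.Adj] (k : ℕ) (B : Finset V) : Prop :=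
  ∀ v : V, (insert v (G.neighborFinset v) ∩ B).card ≤ k

/-- The `k`-limited packing number `L_k(G)`. -/
noncomputable def limPackNum {V : Type*} [Fintype V] [DecidableEq V] (G : SimpleGraph V)
    [DecidableRel G.Adj] (k : ℕ) : ℕ :=
  sSup {n | ∃ B : Finset V, limPack G k B ∧ B.card = n}

/-- The vertex type: `X = Fin a` plus `Y` = non-diagonal pairs from `X`. -/
abbrev Vt (a : ℕ) := Fin a ⊕ {p : Sym2 (Fin a) // ¬ p.IsDiag}

def myAdj (a : ℕ) : Vt a → Vt a → Prop
  | .inl _, .inl _ => False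
  | .inl x, .inr p => x ∈ p.1
  | .inr p, .inl x => x ∈ p.1
  | .inr p, .inr q => p ≠ q

instance (a : ℕ) : DecidableRel (myAdj a) := fun u v => by
  rcases u with x | p <;> rcases v with y | q
  · exact inferInstanceAs (Decidable False)
  · exact inferInstanceAs (Decidable (x ∈ q.1))
  · exact inferInstanceAs (Decidable (y ∈ p.1))
  · exact inferInstanceAs (Decidable (p ≠ q))

def myG (a : ℕ) : SimpleGraph (Vt a) where
  Adj := myAdj a
  symm := by
    constructor
    rintro (x | p) (y | q) h
    · exact h
    · exact h
    · exact h
    · exact (Ne.symm h : q ≠ p)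
  loopless := by
    constructor
    rintro (x | p) h
    · exact h
    · exact (h : p ≠ p) rfl

instance (a : ℕ) : DecidableRel (myG a).Adj :=
  inferInstanceAs (DecidableRel (myAdj a))

lemma myG_adj_inl_inl {a : ℕ} (x y : Fin a) : ¬ (myG a).Adj (.inl x) (.inl y) := id

lemma myG_adj_inl_inr {a : ℕ} (x : Fin a) (p : {p : Sym2 (Fin a) // ¬ p.IsDiag}) :
    (myG a).Adj (.inl x) (.inr p) ↔ x ∈ p.1 := Iff.rfl

lemma myG_adj_inr_inl {a : ℕ} (x : Fin a) (p : {p : Sym2 (Fin a) // ¬ p.IsDiag}) :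
    (myG a).Adj (.inr p) (.inl x) ↔ x ∈ p.1 := Iff.rfl

lemma myG_adj_inr_inr {a : ℕ} (p q : {p : Sym2 (Fin a) // ¬ p.IsDiag}) :
    (myG a).Adj (.inr p) (.inr q) ↔ p ≠ q := Iff.rfl

theorem stmt_17 (a : ℕ) (ha : 2 ≤ a) :
    ∃ (V : Type) (_ : Fintype V) (_ : DecidableEq V) (G : SimpleGraph V)
      (_ : DecidableRel G.Adj), G.diam = 2 ∧ limPackNum G 2 = a := by
  haveI : Nontrivial (Fin a) := Fin.nontrivial_iff_two_le.mpr ha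
  set x0 : Fin a := ⟨0, by omega⟩ with hx0
  set x1 : Fin a := ⟨1, by omega⟩ with hx1
  have hx01 : x0 ≠ x1 := by simp [hx0, hx1, Fin.ext_iff]
  set p0 : {p : Sym2 (Fin a) // ¬ p.IsDiag} := ⟨s(x0, x1), by simp [hx01]⟩ with hp0
  refine ⟨Vt a, inferInstance, inferInstance, myG a, inferInstance, ?_, ?_⟩
  · -- diameter
    have hediam : (myG a).ediam = 2 := by
      apply le_antisymm
      · apply SimpleGraph.ediam_le_of_edist_le
        intro u v
        rcases eq_or_ne u v with rfl | huv
        · simp [SimpleGraph.edist_self]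
        have key : (myG a).Adj u v ∨ ∃ w, (myG a).Adj u w ∧ (myG a).Adj w v := by
          rcases u with x | p <;> rcases v with y | q
          · right
            have hxy : x ≠ y := fun h => huv (by rw [h])
            exact ⟨.inr ⟨s(x, y), by simp [hxy]⟩, by simp [myG_adj_inl_inr],
              by simp [myG_adj_inr_inl]⟩
          · by_cases hm : x ∈ q.1
            · exact Or.inl hm
            · obtain ⟨z, hz⟩ := exists_ne x
              right
              refine ⟨.inr ⟨s(x, z), by simp [hz.symm]⟩, by simp [myG_adj_inl_inr], ?_⟩
              rw [myG_adj_inr_inr]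
              intro h
              apply hm
              rw [← h]
              simp
          · by_cases hm : y ∈ p.1
            · exact Or.inl hm
            · obtain ⟨z, hz⟩ := exists_ne y
              right
              refine ⟨.inr ⟨s(y, z), by simp [hz.symm]⟩, ?_, by simp [myG_adj_inr_inl]⟩
              rw [myG_adj_inr_inr]
              intro h
              apply hm
              rw [h]
              simp
          · left
            rw [myG_adj_inr_inr]
            intro h; exact huv (by rw [h])
        rcases key with h | ⟨w, h1, h2⟩
        · calc (myG a).edist u v ≤ 1 := le_of_eq (SimpleGraph.edist_eq_one_iff_adj.mpr h)
            _ ≤ 2 := by norm_num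
        · calc (myG a).edist u v ≤ (myG a).edist u w + (myG a).edist w v :=
              SimpleGraph.edist_triangle
            _ ≤ 1 + 1 := add_le_add (le_of_eq (SimpleGraph.edist_eq_one_iff_adj.mpr h1))
              (le_of_eq (SimpleGraph.edist_eq_one_iff_adj.mpr h2))
            _ = 2 := by norm_num
      · have hne : (Sum.inl x0 : Vt a) ≠ Sum.inl x1 := by simp [hx01]
        have h0 : (myG a).edist (.inl x0) (.inl x1) ≠ 0 :=
          fun h => hne (SimpleGraph.edist_eq_zero_iff.mp h)
        have h1 : (myG a).edist (.inl x0) (.inl x1) ≠ 1 := fun h =>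
          myG_adj_inl_inl x0 x1 (SimpleGraph.edist_eq_one_iff_adj.mp h)
        have h2 : 2 ≤ (myG a).edist (.inl x0) (.inl x1) := by
          have hlt : 1 < (myG a).edist (.inl x0) (.inl x1) :=
            lt_of_le_of_ne (Order.one_le_iff_pos.mpr (pos_iff_ne_zero.mpr h0)) (Ne.symm h1)
          have := (ENat.add_one_le_iff (by norm_num : (1 : ℕ∞) ≠ ⊤)).mpr hlt
          simpa [one_add_one_eq_two] using this
        exact h2.trans SimpleGraph.edist_le_ediam
    rw [SimpleGraph.diam, hediam]
    rfl
  · -- limited packing number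
    have hmem : a ∈ {n | ∃ B : Finset (Vt a), limPack (myG a) 2 B ∧ B.card = n} := by
      refine ⟨(univ : Finset (Fin a)).image Sum.inl, ?_, ?_⟩
      · intro v
        rcases v with x | p
        · have hsub : insert (Sum.inl x : Vt a) ((myG a).neighborFinset (.inl x)) ∩
              (univ : Finset (Fin a)).image Sum.inl ⊆ {Sum.inl x} := by
            intro u hu
            rw [mem_inter, mem_insert, SimpleGraph.mem_neighborFinset] at hu
            obtain ⟨hu1, hu2⟩ := hu
            rcases hu1 with rfl | hadj
            · simp
            · obtain ⟨z, _, rfl⟩ := mem_image.mp hu2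
              exact absurd hadj (myG_adj_inl_inl x z)
          calc _ ≤ ({Sum.inl x} : Finset (Vt a)).card := card_le_card hsub
            _ ≤ 2 := by simp
        · obtain ⟨x, y, hxy⟩ : ∃ x y : Fin a, p.1 = s(x, y) := by
            induction p.1 using Sym2.inductionOn with
            | hf x y => exact ⟨x, y, rfl⟩
          have hsub : insert (Sum.inr p : Vt a) ((myG a).neighborFinset (.inr p)) ∩
              (univ : Finset (Fin a)).image Sum.inl ⊆ {Sum.inl x, Sum.inl y} := by
            intro u hu
            rw [mem_inter, mem_insert, SimpleGraph.mem_neighborFinset] at hu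
            obtain ⟨hu1, hu2⟩ := hu
            obtain ⟨z, _, rfl⟩ := mem_image.mp hu2
            rcases hu1 with h | hadj
            · exact absurd h (by simp)
            · rw [myG_adj_inr_inl, hxy, Sym2.mem_iff] at hadj
              rcases hadj with rfl | rfl <;> simp
          calc _ ≤ ({Sum.inl x, Sum.inl y} : Finset (Vt a)).card := card_le_card hsub
            _ ≤ 2 := card_insert_le _ _ |>.trans (by simp)
      · rw [card_image_of_injective _ Sum.inl_injective, card_univ, Fintype.card_fin]
    have hub : ∀ n ∈ {n | ∃ B : Finset (Vt a), limPack (myG a) 2 B ∧ B.card = n}, n ≤ a := by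
      rintro n ⟨B, hB, rfl⟩
      set N : Finset (Vt a) := insert (Sum.inr p0) ((myG a).neighborFinset (.inr p0)) with hN
      have hBsplit : (B ∩ N).card + (B \ N).card = B.card := card_inter_add_card_sdiff B N
      have h1 : (B ∩ N).card ≤ 2 := by rw [inter_comm]; exact hB (.inr p0)
      have h2 : B \ N ⊆ ((univ : Finset (Fin a)).image Sum.inl) \ {Sum.inl x0, Sum.inl x1} := by
        intro u hu
        rw [mem_sdiff] at hu
        obtain ⟨huB, huN⟩ := hu
        have hNmem : ∀ w : Vt a, (Sum.inr p0 : Vt a) = w ∨ (myG a).Adj (.inr p0) w → w ∈ N := by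
          intro w hw
          rw [hN, mem_insert, SimpleGraph.mem_neighborFinset]
          rcases hw with h | h
          · exact Or.inl h.symm
          · exact Or.inr h
        rcases u with z | q
        · rw [mem_sdiff]
          constructor
          · simp
          · intro hmem
            rw [mem_insert, mem_singleton] at hmem
            apply huN
            apply hNmem
            right
            rw [myG_adj_inr_inl, hp0]
            rcases hmem with h | h
            · rw [Sum.inl.injEq] at h; subst h; simp
            · rw [Sum.inl.injEq] at h; subst h; simp
        · exfalso
          apply huN
          rcases eq_or_ne p0 q with rfl | hne
          · exact hNmem _ (Or.inl rfl)
          · exact hNmem _ (Or.inr (myG_adj_inr_inr p0 q |>.mpr hne))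
      have hss : ({Sum.inl x0, Sum.inl x1} : Finset (Vt a)) ⊆
          (univ : Finset (Fin a)).image Sum.inl := by
        intro u hu
        rw [mem_insert, mem_singleton] at hu
        rcases hu with rfl | rfl <;> exact mem_image.mpr ⟨_, mem_univ _, rfl⟩
      have h3 : (((univ : Finset (Fin a)).image Sum.inl) \
          ({Sum.inl x0, Sum.inl x1} : Finset (Vt a))).card = a - 2 := by
        rw [card_sdiff_of_subset hss, card_image_of_injective _ Sum.inl_injective, card_univ,
          Fintype.card_fin, card_insert_of_notMem (by simp [hx01]), card_singleton]
      have h4 : (B \ N).card ≤ a - 2 := h3 ▸ card_le_card h2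
      omega
    rw [limPackNum]
    apply le_antisymm
    · exact csSup_le ⟨a, hmem⟩ hub
    · exact le_csSup ⟨a, hub⟩ hmem
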